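/- Let S ⊆ ℤ be a set with |S| = 3 and let s₀ ∈ S be arbitrary. Then every AP-free finite colouring of ℕ contains an almost-monochromatic positive homothetic copy of (S, s₀) lying in ℕ. -/

import Mathlib

/-- A colouring of `ℕ` is AP-free if no infinite arithmetic progression
`{a + n·t : n ∈ ℕ}` with `t ≥ 1` is monochromatic. -/
def APFreeN {k : ℕ} (φ : ℕ → Fin k) : Prop :=
  ¬ ∃ (a t : ℕ) (c : Fin k), 1 ≤ t ∧ ∀ n : ℕ, φ (a + n * t) = c

/-- Infinite vdW: arbitrarily long monochromatic runs with difference divisible by Q. -/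
lemma vdw_run (k l Q : ℕ) (hQ : 1 ≤ Q) (φ : ℕ → Fin k) :
    ∃ b e, 1 ≤ e ∧ Q ∣ e ∧ ∀ i ≤ l, φ (b + i * e) = φ b := by
  obtain ⟨a, ha, b, c, hc⟩ :=
    Combinatorics.exists_mono_homothetic_copy (Finset.range (l + 1)) (fun n => φ (Q * n))
  have key : ∀ i ≤ l, φ (Q * b + i * (Q * a)) = c := by
    intro i hi
    have := hc i (Finset.mem_range.mpr (by omega))
    simpa [smul_eq_mul, show Q * (a * i + b) = Q * b + i * (Q * a) by ring] using this
  have hb : φ (Q * b) = c := by simpa using key 0 (by omega)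
  exact ⟨Q * b, Q * a, Nat.mul_pos hQ ha, ⟨a, rfl⟩, fun i hi => by rw [key i hi, hb]⟩

/-- Finitary vdW via ultrafilter compactness. -/
lemma vdw_fin (k l : ℕ) :
    ∃ W, ∀ ψ : ℕ → Fin k, ∃ b e, 1 ≤ e ∧ b + l * e < W ∧ ∀ i ≤ l, ψ (b + i * e) = ψ b := by
  rcases Nat.eq_zero_or_pos k with hk | hk
  · subst hk; exact ⟨1, fun ψ => (ψ 0).elim0⟩
  by_contra h
  push_neg at h
  choose Ψ hΨ using h
  set U : Ultrafilter ℕ := Filter.hyperfilter ℕ with hU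
  have hchoice : ∀ n : ℕ, ∃ v : Fin k, {W | Ψ W n = v} ∈ U := by
    intro n
    obtain ⟨v, -, hv⟩ := Ultrafilter.eq_pure_of_finite_mem (f := U.map (fun W => Ψ W n))
      (s := (Set.univ : Set (Fin k))) (Set.finite_univ) (Filter.univ_mem)
    refine ⟨v, ?_⟩
    have : {x : Fin k | x = v} ∈ U.map (fun W => Ψ W n) := by
      rw [hv]; simp
    exact Ultrafilter.mem_map.mp this
  choose psiL hpsiL using hchoice
  obtain ⟨b, e, he, -, hmono⟩ := vdw_run k l 1 le_rfl psiL
  have hsets : (⋂ i ∈ Finset.range (l + 1), {W | Ψ W (b + i * e) = psiL (b + i * e)}) ∈ U := by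
    show _ ∈ (U : Filter ℕ)
    rw [Filter.biInter_finset_mem]
    exact fun i _ => hpsiL (b + i * e)
  have hbig : {W | b + l * e < W} ∈ U := by
    apply Filter.hyperfilter_le_cofinite
    have : {W | b + l * e < W}ᶜ ⊆ Set.Iic (b + l * e) := by
      intro x hx; simpa using hx
    exact Set.Finite.subset (Set.finite_Iic _) this
  obtain ⟨W, hW⟩ := Filter.nonempty_of_mem (Filter.inter_mem hsets hbig)
  obtain ⟨hW1, hW2⟩ := hW
  obtain ⟨i, hi, hne⟩ := hΨ W b e he hW2
  apply hne
  have h1 : Ψ W (b + i * e) = psiL (b + i * e) :=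
    Set.mem_iInter₂.mp hW1 i (Finset.mem_range.mpr (by omega))
  have h0 : Ψ W (b + 0 * e) = psiL (b + 0 * e) :=
    Set.mem_iInter₂.mp hW1 0 (Finset.mem_range.mpr (by omega))
  simp only [Nat.zero_mul, Nat.add_zero] at h0
  rw [h1, h0, hmono i hi]

/-- Window vdW: monochromatic runs arbitrarily far out, with uniformly bounded difference. -/
lemma vdw_window (k l : ℕ) (hl : 1 ≤ l) :
    ∃ W, 1 ≤ W ∧ ∀ (φ : ℕ → Fin k) (T : ℕ), ∃ b e, T ≤ b ∧ 1 ≤ e ∧ e ≤ W ∧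
      ∀ i ≤ l, φ (b + i * e) = φ b := by
  obtain ⟨W, hW⟩ := vdw_fin k l
  refine ⟨W + 1, by omega, ?_⟩
  intro φ T
  obtain ⟨b, e, he, hlt, hmono⟩ := hW (fun n => φ (T + n))
  have heW : e ≤ W + 1 := by nlinarith
  refine ⟨T + b, e, by omega, he, heW, fun i hi => ?_⟩
  have := hmono i hi
  rw [show T + b + i * e = T + (b + i * e) by ring]
  simpa using this


/-- deviant at the right end -/
lemma am_right (k D1 D2 : ℕ) (h1 : 1 ≤ D1) (h2 : 1 ≤ D2) (φ : ℕ → Fin k) (hAP : APFreeN φ) :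
    ∃ x m, 1 ≤ m ∧ φ x = φ (x + m * D1) ∧ φ (x + m * (D1 + D2)) ≠ φ x := by
  set D := D1 + D2 with hD
  obtain ⟨b, e, he, -, hmono⟩ := vdw_run k D 1 le_rfl φ
  have hex : ∃ n, φ (b + n * e) ≠ φ b := by
    by_contra hc; push_neg at hc
    exact hAP ⟨b, e, φ b, he, hc⟩
  set n₀ := Nat.find hex with hn₀
  have hdev : φ (b + n₀ * e) ≠ φ b := Nat.find_spec hex
  have hlow : ∀ i < n₀, φ (b + i * e) = φ b := by
    intro i hi
    by_contra hne
    exact absurd hi (not_lt.mpr (Nat.find_le hne))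
  have hn₀D : D < n₀ := by
    by_contra hc
    exact hdev (hmono n₀ (by omega))
  refine ⟨b + (n₀ - D) * e, e, he, ?_, ?_⟩
  · rw [show b + (n₀ - D) * e + e * D1 = b + (n₀ - D2) * e by
      have : n₀ - D + D1 = n₀ - D2 := by omega
      calc b + (n₀ - D) * e + e * D1 = b + (n₀ - D + D1) * e := by ring
        _ = b + (n₀ - D2) * e := by rw [this]]
    rw [hlow (n₀ - D) (by omega), hlow (n₀ - D2) (by omega)]
  · rw [show b + (n₀ - D) * e + e * D = b + n₀ * e by
      have h' : n₀ - D + D = n₀ := by omega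
      calc b + (n₀ - D) * e + e * D = b + (n₀ - D + D) * e := by ring
        _ = b + n₀ * e := by rw [h']]
    rw [hlow (n₀ - D) (by omega)]
    exact hdev

/-- key for left: run extension to the left -/
lemma ext_left (k D1 D2 : ℕ) (h1 : 1 ≤ D1) (h2 : 1 ≤ D2) (φ : ℕ → Fin k)
    (H : ∀ x m, 1 ≤ m → φ (x + m * D1) = φ (x + m * (D1 + D2)) → φ x = φ (x + m * D1))
    (ρ e M : ℕ) (he : 1 ≤ e)
    (hrun : ∀ i ≤ D1 + D2, φ (ρ + (M + i) * e) = φ (ρ + M * e)) :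
    ∀ t ≤ M, φ (ρ + t * e) = φ (ρ + M * e) := by
  set D := D1 + D2 with hD
  set c := φ (ρ + M * e) with hc
  have key : ∀ u, φ (ρ + (u + D1) * e) = c → φ (ρ + (u + D) * e) = c → φ (ρ + u * e) = c := by
    intro u hu1 hu2
    have e1 : ρ + u * e + e * D1 = ρ + (u + D1) * e := by ring
    have e2 : ρ + u * e + e * D = ρ + (u + D) * e := by ring
    have := H (ρ + u * e) e he (by rw [e1, e2, hu1, hu2])
    rw [this, e1, hu1]
  have claim : ∀ s t, t + s = M → φ (ρ + t * e) = c := by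
    intro s
    induction s using Nat.strong_induction_on with
    | _ s IH =>
      intro t ht
      rcases Nat.eq_zero_or_pos s with rfl | hs
      · rw [show t = M by omega]
      have hA : φ (ρ + (t + D1) * e) = c := by
        rcases le_or_gt (t + D1) M with hle | hlt
        · exact IH (M - (t + D1)) (by omega) (t + D1) (by omega)
        · have : t + D1 = M + (t + D1 - M) := by omega
          rw [this]; exact hrun _ (by omega)
      have hB : φ (ρ + (t + D) * e) = c := by
        rcases le_or_gt (t + D) M with hle | hlt
        · exact IH (M - (t + D)) (by omega) (t + D) (by omega)
        · have : t + D = M + (t + D - M) := by omega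
          rw [this]; exact hrun _ (by omega)
      exact key t hA hB
  intro t ht
  exact claim (M - t) t (by omega)

/-- deviant at the left end -/
lemma am_left (k D1 D2 : ℕ) (h1 : 1 ≤ D1) (h2 : 1 ≤ D2) (φ : ℕ → Fin k) (hAP : APFreeN φ) :
    ∃ x m, 1 ≤ m ∧ φ (x + m * D1) = φ (x + m * (D1 + D2)) ∧ φ x ≠ φ (x + m * D1) := by
  rcases Nat.eq_zero_or_pos k with rfl | hk
  · exact (φ 0).elim0
  by_contra h
  push_neg at h
  have H : ∀ x m, 1 ≤ m → φ (x + m * D1) = φ (x + m * (D1 + D2)) → φ x = φ (x + m * D1) :=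
    fun x m hm heq => h x m hm heq
  set D := D1 + D2 with hD
  obtain ⟨W, hW1, hwin⟩ := vdw_window k D (by omega)
  have key : ∀ T, ∃ r, ∃ e, ∃ c : Fin k, r ≤ W ∧ 1 ≤ e ∧ e ≤ W ∧
      ∀ t, r + t * e ≤ T → φ (r + t * e) = c := by
    intro T
    obtain ⟨b, e, hTb, he, heW, hmono⟩ := hwin φ T
    set ρ := b % e with hρ
    set M := b / e with hM
    have hbe : ρ + M * e = b := by rw [hρ, hM]; exact Nat.mod_add_div' b e
    have hrun : ∀ i ≤ D, φ (ρ + (M + i) * e) = φ (ρ + M * e) := by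
      intro i hi
      have : ρ + (M + i) * e = b + i * e := by rw [← hbe]; ring
      rw [this, hbe]
      exact hmono i hi
    have hext := ext_left k D1 D2 h1 h2 φ H ρ e M he hrun
    refine ⟨ρ, e, φ (ρ + M * e), ?_, he, heW, ?_⟩
    · have : ρ < e := Nat.mod_lt b he
      omega
    · intro t hle
      apply hext
      -- t ≤ M since ρ + t*e ≤ T ≤ b = ρ + M*e
      have h1' : ρ + t * e ≤ ρ + M * e := by
        rw [hbe]; omega
      have := Nat.le_of_mul_le_mul_right (by omega : t * e ≤ M * e) (by omega : 0 < e)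
      exact this
  choose R E C hR hE1 hE2 hprop using key
  have : ∃ y : Fin (W+1) × Fin (W+1) × Fin k, Set.Infinite
      ((fun T => (⟨R T, by have := hR T; omega⟩, ⟨E T, by have := hE2 T; omega⟩, C T)
        : ℕ → Fin (W+1) × Fin (W+1) × Fin k) ⁻¹' {y}) := by
    obtain ⟨y, hy⟩ := Finite.exists_infinite_fiber
      ((fun T => (⟨R T, by have := hR T; omega⟩, ⟨E T, by have := hE2 T; omega⟩, C T)
        : ℕ → Fin (W+1) × Fin (W+1) × Fin k))
    exact ⟨y, Set.infinite_coe_iff.mp hy⟩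
  obtain ⟨⟨r, e, c⟩, hinf⟩ := this
  apply hAP
  refine ⟨r.val, e.val, c, ?_, ?_⟩
  · obtain ⟨T, hT, -⟩ := hinf.exists_gt 0
    have : E T = e.val := by
      have := congrArg (fun p => p.2.1.val) hT
      simpa using this
    have := hE1 T; omega
  · intro n
    obtain ⟨T, hT, hTgt⟩ := hinf.exists_gt (r.val + n * e.val)
    have her : R T = r.val := by
      have := congrArg (fun p => p.1.val) hT; simpa using this
    have hee : E T = e.val := by
      have := congrArg (fun p => p.2.1.val) hT; simpa using this
    have hcc : C T = c := by
      have := congrArg (fun p => p.2.2) hT; simpa using this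
    have := hprop T n (by rw [her, hee]; omega)
    rw [her, hee, hcc] at this
    exact this


def downF {K : ℕ} (hK : 0 < K) (c : Fin (K+1)) (v : Fin (K+1)) : Fin K :=
  if h : v.val < c.val then ⟨v.val, by have := c.isLt; omega⟩
  else ⟨v.val - 1, by have := v.isLt; omega⟩

def upF {K : ℕ} (c : Fin (K+1)) (w : Fin K) : Fin (K+1) :=
  if w.val < c.val then ⟨w.val, by have := w.isLt; omega⟩
  else ⟨w.val + 1, by have := w.isLt; omega⟩

lemma upF_downF {K : ℕ} (hK : 0 < K) (c v : Fin (K+1)) (hv : v ≠ c) :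
    upF c (downF hK c v) = v := by
  have hv' : v.val ≠ c.val := fun h => hv (Fin.ext h)
  have h1 := v.isLt
  have h2 := c.isLt
  unfold upF downF
  split_ifs <;> (apply Fin.ext) <;> simp_all <;> omega

lemma exists_round_up (D δ : ℕ) (hD : 1 ≤ D) (hδ : 1 ≤ δ) :
    ∃ i s, i < D ∧ 1 ≤ s ∧ δ + i = s * D := by
  have h3 := Nat.div_add_mod δ D
  have h4 : δ % D < D := Nat.mod_lt _ (by omega)
  have hcomm : D * (δ / D) = (δ / D) * D := Nat.mul_comm _ _
  rcases Nat.eq_zero_or_pos (δ % D) with hr | hr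
  · refine ⟨0, δ / D, by omega, ?_, by omega⟩
    rcases Nat.eq_zero_or_pos (δ / D) with h0 | h0
    · rw [h0, Nat.mul_zero] at h3; omega
    · exact h0
  · refine ⟨D - δ % D, δ / D + 1, by omega, Nat.le_add_left 1 _, ?_⟩
    have hcomm2 : (δ / D + 1) * D = D * (δ / D) + D := by ring
    omega

/-- deviant in the middle -/
lemma am_mid : ∀ (k : ℕ) (φ : ℕ → Fin k), APFreeN φ → ∀ (D1 D2 : ℕ), 1 ≤ D1 → 1 ≤ D2 →
    ∃ x m, 1 ≤ m ∧ φ x = φ (x + m * (D1 + D2)) ∧ φ (x + m * D1) ≠ φ x := by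
  intro k
  induction k with
  | zero => intro φ _ _ _ _ _; exact (φ 0).elim0
  | succ K IH =>
    intro φ hAP D1 D2 h1 h2
    by_contra hcon
    push_neg at hcon
    obtain ⟨b, e', he', ⟨f, hf⟩, hmono⟩ :=
      vdw_run (K+1) (D1+D2) (D1*D1) (Nat.mul_pos h1 h1) φ
    have hfpos : 1 ≤ f := by
      rcases Nat.eq_zero_or_pos f with rfl | h
      · rw [hf] at he'; simp at he'
      · exact h
    have hgpos : 1 ≤ D1 * f * D2 := Nat.mul_pos (Nat.mul_pos h1 hfpos) h2
    have hex : ∃ n, φ (b + n * e') ≠ φ b := by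
      by_contra hcne; push_neg at hcne
      exact hAP ⟨b, e', φ b, he', hcne⟩
    set n₀ := Nat.find hex with hn₀def
    have hdev : φ (b + n₀ * e') ≠ φ b := Nat.find_spec hex
    have hlow : ∀ i < n₀, φ (b + i * e') = φ b := by
      intro i hi
      by_contra hne
      exact absurd hi (not_lt.mpr (Nat.find_le hne))
    have hn₀D : D1 + D2 < n₀ := by
      by_contra hc
      exact hdev (hmono n₀ (by omega))
    have miss : ∀ t, 1 ≤ t → t ≤ n₀ → φ (b + n₀ * e' + t * (D1 * f * D2)) ≠ φ b := by
      intro t ht1 ht2 hceq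
      have hx : φ (b + (n₀ - t) * e') = φ b := hlow _ (by omega)
      have e1 : b + (n₀ - t) * e' + (t * (D1 * f)) * D1 = b + n₀ * e' := by
        have hj : (n₀ - t) + t = n₀ := by omega
        calc b + (n₀ - t) * e' + (t * (D1 * f)) * D1
            = b + ((n₀ - t) + t) * e' := by rw [hf]; ring
          _ = b + n₀ * e' := by rw [hj]
      have e2 : b + (n₀ - t) * e' + (t * (D1 * f)) * (D1 + D2)
          = b + n₀ * e' + t * (D1 * f * D2) := by
        calc b + (n₀ - t) * e' + (t * (D1 * f)) * (D1 + D2)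
            = (b + (n₀ - t) * e' + (t * (D1 * f)) * D1) + t * (D1 * f * D2) := by ring
          _ = b + n₀ * e' + t * (D1 * f * D2) := by rw [e1]
      have hstep := hcon (b + (n₀ - t) * e') (t * (D1 * f))
        (Nat.mul_pos (by omega) (Nat.mul_pos h1 hfpos))
        (by rw [e2, hceq, hx])
      rw [e1] at hstep
      exact hdev (by rw [hstep, hx])
    by_cases hA : ∀ n, φ (b + n₀ * e' + (D1 * f * D2) + n * (D1 * f * D2)) ≠ φ b
    · -- recursion to fewer colours
      rcases Nat.eq_zero_or_pos K with rfl | hK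
      · refine hA 0 (Fin.ext ?_)
        have hx1 := (φ (b + n₀ * e' + (D1 * f * D2) + 0 * (D1 * f * D2))).isLt
        have hx2 := (φ b).isLt
        omega
      set c := φ b with hc
      set ψ : ℕ → Fin K :=
        fun n => downF hK c (φ (b + n₀ * e' + (D1 * f * D2) + n * (D1 * f * D2))) with hψ
      have hψAP : APFreeN ψ := by
        rintro ⟨a', t', c', ht', hall⟩
        apply hAP
        refine ⟨b + n₀ * e' + (D1 * f * D2) + a' * (D1 * f * D2), t' * (D1 * f * D2), upF c c',
          Nat.mul_pos ht' hgpos, fun n => ?_⟩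
        have harith : b + n₀ * e' + (D1 * f * D2) + a' * (D1 * f * D2) + n * (t' * (D1 * f * D2))
            = b + n₀ * e' + (D1 * f * D2) + (a' + n * t') * (D1 * f * D2) := by ring
        rw [harith]
        have hv : downF hK c (φ (b + n₀ * e' + (D1 * f * D2) + (a' + n * t') * (D1 * f * D2)))
            = c' := hall n
        calc φ (b + n₀ * e' + (D1 * f * D2) + (a' + n * t') * (D1 * f * D2))
            = upF c (downF hK c
                (φ (b + n₀ * e' + (D1 * f * D2) + (a' + n * t') * (D1 * f * D2)))) :=
              (upF_downF hK c _ (hA (a' + n * t'))).symm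
          _ = upF c c' := by rw [hv]
      obtain ⟨X, M, hM, hEq, hNe⟩ := IH ψ hψAP D1 D2 h1 h2
      have hEq0 : downF hK c (φ (b + n₀ * e' + (D1 * f * D2) + X * (D1 * f * D2)))
          = downF hK c (φ (b + n₀ * e' + (D1 * f * D2) + (X + M * (D1 + D2)) * (D1 * f * D2)))
          := hEq
      have hEq' : φ (b + n₀ * e' + (D1 * f * D2) + X * (D1 * f * D2))
          = φ (b + n₀ * e' + (D1 * f * D2) + (X + M * (D1 + D2)) * (D1 * f * D2)) := by
        calc φ (b + n₀ * e' + (D1 * f * D2) + X * (D1 * f * D2))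
            = upF c (downF hK c (φ (b + n₀ * e' + (D1 * f * D2) + X * (D1 * f * D2)))) :=
              (upF_downF hK c _ (hA X)).symm
          _ = upF c (downF hK c (φ (b + n₀ * e' + (D1 * f * D2)
                + (X + M * (D1 + D2)) * (D1 * f * D2)))) := by rw [hEq0]
          _ = _ := upF_downF hK c _ (hA (X + M * (D1 + D2)))
      have hstep := hcon (b + n₀ * e' + (D1 * f * D2) + X * (D1 * f * D2)) (M * (D1 * f * D2))
        (Nat.mul_pos hM hgpos)
        (by rw [show b + n₀ * e' + (D1 * f * D2) + X * (D1 * f * D2)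
              + (M * (D1 * f * D2)) * (D1 + D2)
            = b + n₀ * e' + (D1 * f * D2) + (X + M * (D1 + D2)) * (D1 * f * D2) by ring]
            exact hEq')
      apply hNe
      show downF hK c (φ (b + n₀ * e' + (D1 * f * D2) + (X + M * D1) * (D1 * f * D2))) = ψ X
      have harith2 : b + n₀ * e' + (D1 * f * D2) + (X + M * D1) * (D1 * f * D2)
          = b + n₀ * e' + (D1 * f * D2) + X * (D1 * f * D2) + (M * (D1 * f * D2)) * D1 := by ring
      rw [harith2, hstep]
    · push_neg at hA
      have hexB : ∃ n, φ (b + n₀ * e' + (D1 * f * D2) + n * (D1 * f * D2)) = φ b := hA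
      set nst := Nat.find hexB with hnstdef
      set tst := nst + 1 with htstdef
      have harr : ∀ t, 1 ≤ t → b + n₀ * e' + (D1 * f * D2) + (t - 1) * (D1 * f * D2)
          = b + n₀ * e' + t * (D1 * f * D2) := by
        intro t ht1
        have h9 : 1 + (t - 1) = t := by omega
        calc b + n₀ * e' + (D1 * f * D2) + (t - 1) * (D1 * f * D2)
            = b + n₀ * e' + (1 + (t - 1)) * (D1 * f * D2) := by ring
          _ = b + n₀ * e' + t * (D1 * f * D2) := by rw [h9]
      have hts : φ (b + n₀ * e' + tst * (D1 * f * D2)) = φ b := by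
        have hsp := Nat.find_spec hexB
        rw [← harr tst (by omega)]
        rw [show tst - 1 = nst by omega]
        exact hsp
      have htmin : ∀ t, 1 ≤ t → t < tst → φ (b + n₀ * e' + t * (D1 * f * D2)) ≠ φ b := by
        intro t ht1 htlt hceq
        have : nst ≤ t - 1 := Nat.find_le (by rw [harr t ht1]; exact hceq)
        omega
      have htn₀ : n₀ < tst := by
        by_contra hle
        exact miss tst (by omega) (by omega) hts
      set δ := tst - n₀ with hδ
      have hδ1 : 1 ≤ δ := by omega
      obtain ⟨i, s, hiD, hs1, his⟩ := exists_round_up (D1 + D2) δ (by omega) hδ1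
      have ht1 : 1 ≤ s * D1 := Nat.mul_pos hs1 h1
      have httst : s * D1 < tst := by
        have h5 : s * D1 + s * D2 = δ + i := by rw [his]; ring
        have h6 : 1 ≤ s * D2 := Nat.mul_pos hs1 h2
        omega
      have hvne : φ (b + n₀ * e' + (s * D1) * (D1 * f * D2)) ≠ φ b := htmin (s * D1) ht1 httst
      have hxc : φ (b + i * e') = φ b := hlow i (by omega)
      have claim1 : b + i * e' + (D1 * f * ((n₀ - i) + s * D2)) * D1
          = b + n₀ * e' + (s * D1) * (D1 * f * D2) := by
        have hj : i + (n₀ - i) = n₀ := by omega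
        calc b + i * e' + (D1 * f * ((n₀ - i) + s * D2)) * D1
            = b + (i + (n₀ - i)) * e' + (s * D1) * (D1 * f * D2) := by rw [hf]; ring
          _ = b + n₀ * e' + (s * D1) * (D1 * f * D2) := by rw [hj]
      have hj2 : (n₀ - i) + s * (D1 + D2) = tst := by
        have h8 : s * (D1 + D2) = δ + i := his.symm
        omega
      have claim2 : b + i * e' + (D1 * f * ((n₀ - i) + s * D2)) * (D1 + D2)
          = b + n₀ * e' + tst * (D1 * f * D2) := by
        have hj : i + (n₀ - i) = n₀ := by omega
        calc b + i * e' + (D1 * f * ((n₀ - i) + s * D2)) * (D1 + D2)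
            = b + (i + (n₀ - i)) * e' + ((n₀ - i) + s * (D1 + D2)) * (D1 * f * D2) := by
              rw [hf]; ring
          _ = b + n₀ * e' + tst * (D1 * f * D2) := by rw [hj, hj2]
      have hmpos : 1 ≤ D1 * f * ((n₀ - i) + s * D2) := by
        have h6 : 1 ≤ s * D2 := Nat.mul_pos hs1 h2
        exact Nat.mul_pos (Nat.mul_pos h1 hfpos) (by omega)
      have hstep := hcon (b + i * e') (D1 * f * ((n₀ - i) + s * D2)) hmpos
        (by rw [claim2, hts, hxc])
      rw [claim1] at hstep
      exact hvne (by rw [hstep, hxc])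


/-- If `S ⊆ ℤ` has `|S| = 3` and `s₀ ∈ S` is arbitrary, then every
AP-free finite colouring of `ℕ` contains an almost-monochromatic positive
homothetic copy of `(S, s₀)` lying in `ℕ`. -/
theorem am_homothet_three (S : Finset ℤ) (hcard : S.card = 3)
    (s₀ : ℤ) (hs₀ : s₀ ∈ S)
    (k : ℕ) (φ : ℕ → Fin k) (hAP : APFreeN φ) :
    ∃ (c l : ℝ) (F : ℤ → ℕ), 0 < l ∧ (∀ s ∈ S, (F s : ℝ) = c + l * (s : ℝ)) ∧
      (∃ col, ∀ s ∈ S, s ≠ s₀ → φ (F s) = col) ∧ ¬ ∃ col, ∀ s ∈ S, φ (F s) = col := by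
  obtain ⟨p, q, r, hL⟩ : ∃ p q r : ℤ, S.sort (· ≤ ·) = [p, q, r] := by
    rw [← List.length_eq_three, Finset.length_sort, hcard]
  have hsorted := List.sortedLT_iff_pairwise.mp (Finset.sortedLT_sort S)
  rw [hL] at hsorted
  simp only [List.pairwise_cons, List.mem_cons, List.mem_singleton, List.not_mem_nil,
    List.Pairwise.nil, and_true] at hsorted
  have hpq : p < q := hsorted.1 q (Or.inl rfl)
  have hpr : p < r := hsorted.1 r (Or.inr (Or.inl rfl))
  have hqr : q < r := hsorted.2.1 r (Or.inl rfl)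
  have hmem : ∀ s : ℤ, s ∈ S ↔ s = p ∨ s = q ∨ s = r := by
    intro s
    rw [← Finset.mem_sort (α := ℤ) (· ≤ ·), hL]
    simp
  set d1 := (q - p).toNat with hd1def
  set d2 := (r - q).toNat with hd2def
  have hd1 : (d1 : ℤ) = q - p := Int.toNat_of_nonneg (by omega)
  have hd2 : (d2 : ℤ) = r - q := Int.toNat_of_nonneg (by omega)
  have hd1pos : 1 ≤ d1 := by omega
  have hd2pos : 1 ≤ d2 := by omega
  have hd1R : (d1 : ℝ) = (q : ℝ) - (p : ℝ) := by exact_mod_cast congrArg (Int.cast : ℤ → ℝ) hd1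
  have hd2R : (d2 : ℝ) = (r : ℝ) - (q : ℝ) := by exact_mod_cast congrArg (Int.cast : ℤ → ℝ) hd2
  have hs₀' : s₀ = p ∨ s₀ = q ∨ s₀ = r := (hmem s₀).mp hs₀
  have build : ∀ x m : ℕ, 1 ≤ m →
      ∃ (c l : ℝ) (F : ℤ → ℕ), 0 < l ∧ (∀ s ∈ S, (F s : ℝ) = c + l * (s : ℝ)) ∧
        F p = x ∧ F q = x + m * d1 ∧ F r = x + m * (d1 + d2) := by
    intro x m hm
    have hFp : (fun s => if s = p then x else if s = q then x + m * d1
        else x + m * (d1 + d2)) p = x := by simp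
    have hFq : (fun s => if s = p then x else if s = q then x + m * d1
        else x + m * (d1 + d2)) q = x + m * d1 := by simp [hpq.ne']
    have hFr : (fun s => if s = p then x else if s = q then x + m * d1
        else x + m * (d1 + d2)) r = x + m * (d1 + d2) := by simp [hpr.ne', hqr.ne']
    refine ⟨(x : ℝ) - m * p, (m : ℝ),
      fun s => if s = p then x else if s = q then x + m * d1 else x + m * (d1 + d2),
      by positivity, ?_, hFp, hFq, hFr⟩
    intro s hs
    rcases (hmem s).mp hs with rfl | rfl | rfl
    · rw [hFp]; ring
    · rw [hFq]; push_cast; linear_combination (m : ℝ) * hd1R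
    · rw [hFr]; push_cast; linear_combination (m : ℝ) * (hd1R + hd2R)
  rcases hs₀' with rfl | rfl | rfl
  · -- s₀ is the smallest point (here p has been renamed to s₀)
    obtain ⟨x, m, hm, hEq, hNe⟩ := am_left k d1 d2 hd1pos hd2pos φ hAP
    obtain ⟨c, l, F, hl, hcoord, hFp, hFq, hFr⟩ := build x m hm
    refine ⟨c, l, F, hl, hcoord, ⟨φ (F q), ?_⟩, ?_⟩
    · intro s hs hne
      rcases (hmem s).mp hs with rfl | rfl | rfl
      · exact absurd rfl hne
      · rfl
      · rw [hFr, hFq]; exact hEq.symm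
    · rintro ⟨col, hcol⟩
      have h1 := hcol s₀ ((hmem s₀).mpr (Or.inl rfl))
      have h2 := hcol q ((hmem q).mpr (Or.inr (Or.inl rfl)))
      rw [hFp] at h1; rw [hFq] at h2
      exact hNe (h1.trans h2.symm)
  · -- s₀ is the middle point (q renamed to s₀)
    obtain ⟨x, m, hm, hEq, hNe⟩ := am_mid k φ hAP d1 d2 hd1pos hd2pos
    obtain ⟨c, l, F, hl, hcoord, hFp, hFq, hFr⟩ := build x m hm
    refine ⟨c, l, F, hl, hcoord, ⟨φ (F p), ?_⟩, ?_⟩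
    · intro s hs hne
      rcases (hmem s).mp hs with rfl | rfl | rfl
      · rfl
      · exact absurd rfl hne
      · rw [hFr, hFp]; exact hEq.symm
    · rintro ⟨col, hcol⟩
      have h1 := hcol p ((hmem p).mpr (Or.inl rfl))
      have h2 := hcol s₀ ((hmem s₀).mpr (Or.inr (Or.inl rfl)))
      rw [hFp] at h1; rw [hFq] at h2
      exact hNe (h2.trans h1.symm)
  · -- s₀ is the largest point (r renamed to s₀)
    obtain ⟨x, m, hm, hEq, hNe⟩ := am_right k d1 d2 hd1pos hd2pos φ hAP
    obtain ⟨c, l, F, hl, hcoord, hFp, hFq, hFr⟩ := build x m hm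
    refine ⟨c, l, F, hl, hcoord, ⟨φ (F p), ?_⟩, ?_⟩
    · intro s hs hne
      rcases (hmem s).mp hs with rfl | rfl | rfl
      · rfl
      · rw [hFq, hFp]; exact hEq.symm
      · exact absurd rfl hne
    · rintro ⟨col, hcol⟩
      have h1 := hcol p ((hmem p).mpr (Or.inl rfl))
      have h3 := hcol s₀ ((hmem s₀).mpr (Or.inr (Or.inr rfl)))
      rw [hFp] at h1; rw [hFr] at h3
      exact hNe (h3.trans h1.symm)
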